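/- For any real square matrix A, if ψ(A) is Hurwitz (all eigenvalues have negative real part), then A is Hurwitz. -/

import Mathlib

noncomputable def metzlerPart {n : ℕ} (A : Matrix (Fin n) (Fin n) ℝ) : Matrix (Fin n) (Fin n) ℝ :=
  Matrix.of fun i j => if i = j then A i j else |A i j|

def Hurwitz {n : ℕ} (A : Matrix (Fin n) (Fin n) ℝ) : Prop :=
  ∀ μ ∈ spectrum ℂ (A.map (Complex.ofReal)), μ.re < 0

namespace HurwitzAux

open NormedSpace
open scoped ENNReal NNReal

attribute [local instance] Matrix.linftyOpSemiNormedRing Matrix.linftyOpNormedRing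
  Matrix.linftyOpNormedAlgebra

variable {n : ℕ}

noncomputable def entryCLM (i j : Fin n) : Matrix (Fin n) (Fin n) ℂ →L[ℂ] ℂ :=
  LinearMap.toContinuousLinearMap
    { toFun := fun X => X i j
      map_add' := fun _ _ => rfl
      map_smul' := fun _ _ => rfl }

noncomputable def entryCLMR (i j : Fin n) : Matrix (Fin n) (Fin n) ℝ →L[ℝ] ℝ :=
  LinearMap.toContinuousLinearMap
    { toFun := fun X => X i j
      map_add' := fun _ _ => rfl
      map_smul' := fun _ _ => rfl }

lemma exp_entry_eq (X : Matrix (Fin n) (Fin n) ℂ) (i j : Fin n) :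
    (exp X) i j = ∑' k : ℕ, ((k.factorial : ℂ)⁻¹) * ((X ^ k) i j) := by
  have h := (entryCLM i j).map_tsum (expSeries_summable' (𝕂 := ℂ) X)
  rw [exp_eq_tsum ℂ]
  exact h.trans (by simp [entryCLM, smul_eq_mul]; rfl)

lemma exp_entry_eqR (X : Matrix (Fin n) (Fin n) ℝ) (i j : Fin n) :
    (exp X) i j = ∑' k : ℕ, ((k.factorial : ℝ)⁻¹) * ((X ^ k) i j) := by
  have h := (entryCLMR i j).map_tsum (expSeries_summable' (𝕂 := ℝ) X)
  rw [exp_eq_tsum ℝ]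
  exact h.trans (by simp [entryCLMR, smul_eq_mul]; rfl)

lemma entry_summableR (X : Matrix (Fin n) (Fin n) ℝ) (i j : Fin n) :
    Summable fun k : ℕ => ((k.factorial : ℝ)⁻¹) * ((X ^ k) i j) := by
  have h := ((expSeries_summable' (𝕂 := ℝ) X).map (entryCLMR i j) (entryCLMR i j).continuous)
  simp [entryCLMR, smul_eq_mul, Function.comp_def] at h; exact h

lemma abs_pow_entry_le {X : Matrix (Fin n) (Fin n) ℂ} {N : Matrix (Fin n) (Fin n) ℝ}
    (h : ∀ i j, ‖X i j‖ ≤ N i j) (k : ℕ) (i j : Fin n) :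
    ‖(X ^ k) i j‖ ≤ (N ^ k) i j := by
  induction k generalizing i j with
  | zero =>
    simp only [pow_zero, Matrix.one_apply]
    split <;> simp
  | succ k ih =>
    rw [pow_succ, pow_succ, Matrix.mul_apply, Matrix.mul_apply]
    refine (norm_sum_le _ _).trans (Finset.sum_le_sum fun l _ => ?_)
    rw [norm_mul]
    exact mul_le_mul (ih i l) (h l j) (norm_nonneg _) ((norm_nonneg _).trans (ih i l))

lemma abs_exp_entry_le {X : Matrix (Fin n) (Fin n) ℂ} {N : Matrix (Fin n) (Fin n) ℝ}
    (h : ∀ i j, ‖X i j‖ ≤ N i j) (i j : Fin n) :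
    ‖(exp X) i j‖ ≤ (exp N) i j := by
  rw [exp_entry_eq, exp_entry_eqR]
  have hbound : ∀ k : ℕ, ‖((k.factorial : ℂ)⁻¹) * ((X ^ k) i j)‖
      ≤ ((k.factorial : ℝ)⁻¹) * ((N ^ k) i j) := by
    intro k
    rw [norm_mul, norm_inv]
    have h1 : ‖(k.factorial : ℂ)‖ = (k.factorial : ℝ) := by
      simp
    rw [h1]
    exact mul_le_mul_of_nonneg_left (abs_pow_entry_le h k i j) (by positivity)
  refine (norm_tsum_le_tsum_norm ?_).trans (Summable.tsum_le_tsum hbound ?_ (entry_summableR N i j))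
  · exact (entry_summableR N i j).of_nonneg_of_le (fun _ => norm_nonneg _) hbound
  · exact (entry_summableR N i j).of_nonneg_of_le (fun _ => norm_nonneg _) hbound

lemma exp_smul_one (c : ℂ) :
    exp (c • (1 : Matrix (Fin n) (Fin n) ℂ)) = Complex.exp c • (1 : Matrix (Fin n) (Fin n) ℂ) := by
  have h1 : c • (1 : Matrix (Fin n) (Fin n) ℂ) = algebraMap ℂ _ c :=
    (Algebra.algebraMap_eq_smul_one c).symm
  erw [h1, ← map_exp (algebraMap ℂ (Matrix (Fin n) (Fin n) ℂ)) (continuous_algebraMap _ _),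
    Algebra.algebraMap_eq_smul_one, Complex.exp_eq_exp_ℂ]

lemma exp_smul_oneR (c : ℝ) :
    exp (c • (1 : Matrix (Fin n) (Fin n) ℝ)) = Real.exp c • (1 : Matrix (Fin n) (Fin n) ℝ) := by
  have h1 : c • (1 : Matrix (Fin n) (Fin n) ℝ) = algebraMap ℝ _ c :=
    (Algebra.algebraMap_eq_smul_one c).symm
  erw [h1, ← map_exp (algebraMap ℝ (Matrix (Fin n) (Fin n) ℝ)) (continuous_algebraMap _ _),
    Algebra.algebraMap_eq_smul_one, Real.exp_eq_exp_ℝ]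

lemma exp_add_smul_one (X : Matrix (Fin n) (Fin n) ℂ) (c : ℂ) :
    exp (X + c • 1) = Complex.exp c • exp X := by
  erw [exp_add_of_commute ((Commute.one_right X).smul_right c), exp_smul_one,
    mul_smul_comm, mul_one]; rfl

lemma exp_add_smul_oneR (X : Matrix (Fin n) (Fin n) ℝ) (c : ℝ) :
    exp (X + c • 1) = Real.exp c • exp X := by
  erw [exp_add_of_commute ((Commute.one_right X).smul_right c), exp_smul_oneR,
    mul_smul_comm, mul_one]; rfl

lemma exp_map_ofReal (M : Matrix (Fin n) (Fin n) ℝ) :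
    (exp M).map Complex.ofReal = exp (M.map Complex.ofReal) := by
  have hcont : Continuous (Complex.ofRealAm.mapMatrix (m := Fin n)) :=
    LinearMap.continuous_of_finiteDimensional
      (Complex.ofRealAm.mapMatrix (m := Fin n)).toLinearMap
  have h := map_exp (Complex.ofRealAm.mapMatrix (m := Fin n)) hcont M
  have h2 : (exp : Matrix (Fin n) (Fin n) ℂ → _) = exp := rfl
  calc (exp M).map Complex.ofReal = Complex.ofRealAm.mapMatrix (exp M) := rfl
    _ = exp (Complex.ofRealAm.mapMatrix M) := h
    _ = exp (M.map Complex.ofReal) := by rfl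

lemma key_entry_le (B : Matrix (Fin n) (Fin n) ℝ) (i j : Fin n) :
    ‖(exp (B.map Complex.ofReal)) i j‖ ≤ (exp (metzlerPart B)) i j := by
  set s : ℝ := ∑ l, |B l l| with hs
  have hsl : ∀ i : Fin n, |B i i| ≤ s := fun i =>
    Finset.single_le_sum (f := fun l => |B l l|) (fun _ _ => abs_nonneg _) (Finset.mem_univ i)
  have key : ∀ i j, ‖(B.map Complex.ofReal + (s : ℂ) • 1) i j‖ ≤ (metzlerPart B + s • 1) i j := by
    intro i j
    by_cases hij : i = j
    · subst hij
      simp only [Matrix.add_apply, Matrix.map_apply, Matrix.smul_apply, Matrix.one_apply_eq,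
        smul_eq_mul, mul_one, metzlerPart, Matrix.of_apply, if_pos rfl]
      rw [← Complex.ofReal_add, Complex.norm_real, Real.norm_eq_abs, if_true,
        abs_of_nonneg (by linarith [neg_abs_le (B i i), hsl i])]
    · simp only [Matrix.add_apply, Matrix.map_apply, Matrix.smul_apply, Matrix.one_apply_ne hij,
        smul_eq_mul, mul_zero, add_zero, metzlerPart, Matrix.of_apply, if_neg hij]
      rw [Complex.norm_real, Real.norm_eq_abs]
  have h1 := abs_exp_entry_le key i j
  rw [exp_add_smul_one, exp_add_smul_oneR] at h1
  simp only [Matrix.smul_apply, smul_eq_mul, norm_mul,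
    Complex.norm_exp, Complex.ofReal_re] at h1
  exact le_of_mul_le_mul_left h1 (Real.exp_pos s)

lemma norm_le_of_entrywise (X Y : Matrix (Fin n) (Fin n) ℂ)
    (h : ∀ i j, ‖X i j‖ ≤ ‖Y i j‖) : ‖X‖ ≤ ‖Y‖ := by
  rw [Matrix.linfty_opNorm_def, Matrix.linfty_opNorm_def]
  gcongr with i _ j _
  exact h i j

lemma matrix_mem_spectrum_iff {X : Matrix (Fin n) (Fin n) ℂ} {μ : ℂ} :
    μ ∈ spectrum ℂ X ↔ ∃ v, v ≠ 0 ∧ X.mulVec v = μ • v := by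
  rw [← AlgEquiv.spectrum_eq (Matrix.toLinAlgEquiv' : Matrix (Fin n) (Fin n) ℂ ≃ₐ[ℂ] _) X,
    ← Module.End.hasEigenvalue_iff_mem_spectrum]
  constructor
  · intro h
    obtain ⟨v, hv⟩ := h.exists_hasEigenvector
    exact ⟨v, hv.2, by
      have := Module.End.mem_eigenspace_iff.mp hv.1
      rwa [Matrix.toLinAlgEquiv'_apply] at this⟩
  · rintro ⟨v, hv0, hv⟩
    exact Module.End.hasEigenvalue_of_hasEigenvector
      ⟨Module.End.mem_eigenspace_iff.mpr (by rwa [Matrix.toLinAlgEquiv'_apply]), hv0⟩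

noncomputable def mulVecCLM (v : Fin n → ℂ) : Matrix (Fin n) (Fin n) ℂ →L[ℂ] (Fin n → ℂ) :=
  LinearMap.toContinuousLinearMap
    { toFun := fun X => X.mulVec v
      map_add' := fun X Y => Matrix.add_mulVec X Y v
      map_smul' := fun c X => by simp [Matrix.smul_mulVec] }

lemma pow_mulVec_eigen {X : Matrix (Fin n) (Fin n) ℂ} {μ : ℂ} {v : Fin n → ℂ}
    (hv : X.mulVec v = μ • v) (k : ℕ) : (X ^ k).mulVec v = μ ^ k • v := by
  induction k with
  | zero => simp
  | succ k ih =>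
    rw [pow_succ', ← Matrix.mulVec_mulVec, ih, Matrix.mulVec_smul, hv, pow_succ, mul_smul]

lemma exp_mulVec_eigen {X : Matrix (Fin n) (Fin n) ℂ} {μ : ℂ} {v : Fin n → ℂ}
    (hv : X.mulVec v = μ • v) : (exp X).mulVec v = Complex.exp μ • v := by
  have h1 : (exp X).mulVec v = mulVecCLM v (exp X) := rfl
  rw [h1, exp_eq_tsum ℂ, (mulVecCLM v).map_tsum (expSeries_summable' (𝕂 := ℂ) X)]
  have h2 : ∀ k : ℕ, mulVecCLM v ((k.factorial : ℂ)⁻¹ • X ^ k)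
      = ((k.factorial : ℂ)⁻¹ * μ ^ k) • v := by
    intro k
    rw [map_smul]
    have : mulVecCLM v (X ^ k) = (X ^ k).mulVec v := rfl
    rw [this, pow_mulVec_eigen hv k, smul_smul]
  simp_rw [h2]
  rw [Summable.tsum_smul_const]
  · congr 1
    rw [Complex.exp_eq_exp_ℂ, exp_eq_tsum ℂ]
    simp [smul_eq_mul]
  · simpa [smul_eq_mul] using expSeries_summable' (𝕂 := ℂ) μ

lemma spectrum_exp_subset (X : Matrix (Fin n) (Fin n) ℂ) {lam : ℂ}
    (hl : lam ∈ spectrum ℂ (exp X)) : ∃ μ ∈ spectrum ℂ X, lam = Complex.exp μ := by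
  obtain ⟨v, hv0, hv⟩ := matrix_mem_spectrum_iff.mp hl
  set f : (Fin n → ℂ) →ₗ[ℂ] (Fin n → ℂ) := Matrix.toLinAlgEquiv' X with hf
  set g : (Fin n → ℂ) →ₗ[ℂ] (Fin n → ℂ) := Matrix.toLinAlgEquiv' (exp X) with hg
  set E : Submodule ℂ (Fin n → ℂ) := Module.End.eigenspace g lam with hE
  have hvE : v ∈ E := Module.End.mem_eigenspace_iff.mpr (by
    rw [hg, Matrix.toLinAlgEquiv'_apply]; exact hv)
  haveI : Nontrivial E := nontrivial_of_ne ⟨v, hvE⟩ 0 (by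
    simp only [ne_eq, Submodule.mk_eq_zero]; exact hv0)
  have hcommute : Commute X (exp X) := (Commute.refl X).exp_right
  have hinv : ∀ y ∈ E, f y ∈ E := by
    intro y hy
    have hgy : g y = lam • y := Module.End.mem_eigenspace_iff.mp hy
    refine Module.End.mem_eigenspace_iff.mpr ?_
    have hfg : g (f y) = f (g y) := by
      rw [hf, hg, ← LinearMap.comp_apply, ← LinearMap.comp_apply]
      congr 1
      rw [← Module.End.mul_eq_comp, ← Module.End.mul_eq_comp, ← map_mul, ← map_mul,
        hcommute.eq]
    rw [hfg, hgy, map_smul]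
  let f' : E →ₗ[ℂ] E := f.restrict hinv
  obtain ⟨μ, hμ⟩ := Module.End.exists_eigenvalue f'
  obtain ⟨w, hw⟩ := hμ.exists_hasEigenvector
  have hw0 : (w : Fin n → ℂ) ≠ 0 := fun hc => hw.2 (by exact Subtype.ext hc)
  have hfw : X.mulVec (w : Fin n → ℂ) = μ • (w : Fin n → ℂ) := by
    have h1 : f' w = μ • w := Module.End.mem_eigenspace_iff.mp hw.1
    have h2 : f (w : Fin n → ℂ) = μ • (w : Fin n → ℂ) := by
      have := congrArg Subtype.val h1
      rwa [LinearMap.restrict_coe_apply] at this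
    rwa [hf, Matrix.toLinAlgEquiv'_apply] at h2
  refine ⟨μ, matrix_mem_spectrum_iff.mpr ⟨w, hw0, hfw⟩, ?_⟩
  have h3 : (exp X).mulVec (w : Fin n → ℂ) = lam • (w : Fin n → ℂ) := by
    have := Module.End.mem_eigenspace_iff.mp w.2
    rwa [hg, Matrix.toLinAlgEquiv'_apply] at this
  rw [exp_mulVec_eigen hfw] at h3
  obtain ⟨i, hi⟩ := Function.ne_iff.mp hw0
  have := congrFun h3 i
  simp only [Pi.smul_apply, smul_eq_mul] at this
  exact (mul_right_cancel₀ hi this).symm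

lemma exists_pow_norm_lt_one [Nonempty (Fin n)] (Y : Matrix (Fin n) (Fin n) ℂ)
    (hY : ∀ lam ∈ spectrum ℂ Y, ‖lam‖ < 1) : ∃ k : ℕ, 1 ≤ k ∧ ‖Y ^ k‖ < 1 := by
  obtain ⟨lam0, hmem, hmax⟩ := (spectrum.isCompact (𝕜 := ℂ) Y).exists_isMaxOn
    (spectrum.nonempty Y) continuous_norm.continuousOn
  have hρ : spectralRadius ℂ Y < 1 := by
    have h1 : spectralRadius ℂ Y ≤ (‖lam0‖₊ : ℝ≥0∞) := by
      rw [spectralRadius]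
      exact iSup₂_le fun k hk => by exact_mod_cast ENNReal.coe_le_coe.mpr (hmax hk)
    refine h1.trans_lt ?_
    rw [← ENNReal.coe_one, ENNReal.coe_lt_coe, ← NNReal.coe_lt_coe]
    exact hY lam0 hmem
  have hev := (spectrum.pow_nnnorm_pow_one_div_tendsto_nhds_spectralRadius Y).eventually_lt_const hρ
  obtain ⟨k, hk1, hk2⟩ := (hev.and (Filter.eventually_ge_atTop 1)).exists
  refine ⟨k, hk2, ?_⟩
  have hx : (‖Y ^ k‖₊ : ℝ≥0∞) < 1 := by
    have heq : (‖Y ^ k‖₊ : ℝ≥0∞) = ((‖Y ^ k‖₊ : ℝ≥0∞) ^ (1 / k : ℝ)) ^ (k : ℝ) := by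
      rw [← ENNReal.rpow_mul, one_div,
        inv_mul_cancel₀ (show (k:ℝ) ≠ 0 by exact_mod_cast (Nat.pos_of_ne_zero (by omega)).ne'),
        ENNReal.rpow_one]
    rw [heq]
    exact ENNReal.rpow_lt_one hk1 (by exact_mod_cast Nat.pos_of_ne_zero (show k ≠ 0 by omega))
  rw [← ENNReal.coe_one, ENNReal.coe_lt_coe, ← NNReal.coe_lt_coe] at hx
  exact hx

lemma metzlerPart_nsmul (A : Matrix (Fin n) (Fin n) ℝ) (k : ℕ) :
    metzlerPart (k • A) = k • metzlerPart A := by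
  ext i j
  simp only [metzlerPart, Matrix.of_apply, Matrix.smul_apply, nsmul_eq_mul]
  split
  · rfl
  · rw [abs_mul, Nat.abs_cast]

end HurwitzAux

open HurwitzAux NormedSpace

attribute [local instance] Matrix.linftyOpSemiNormedRing Matrix.linftyOpNormedRing
  Matrix.linftyOpNormedAlgebra

theorem hurwitz_of_metzlerPart_hurwitz {n : ℕ} (A : Matrix (Fin n) (Fin n) ℝ)
    (h : Hurwitz (metzlerPart A)) : Hurwitz A := by
  intro μ hμ
  by_contra hre
  push_neg at hre
  rcases Nat.eq_zero_or_pos n with hn | hn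
  · subst hn
    haveI : Subsingleton (Matrix (Fin 0) (Fin 0) ℂ) :=
      ⟨fun a b => by ext i; exact i.elim0⟩
    exact spectrum.notMem_iff.mpr (isUnit_of_subsingleton _) hμ
  haveI : Nonempty (Fin n) := Fin.pos_iff_nonempty.mp hn
  set Ac : Matrix (Fin n) (Fin n) ℂ := A.map Complex.ofReal with hAc
  set Mc : Matrix (Fin n) (Fin n) ℂ := (metzlerPart A).map Complex.ofReal with hMc
  -- all eigenvalues of exp Mc have norm < 1
  have hY : ∀ lam ∈ spectrum ℂ (exp Mc), ‖lam‖ < 1 := by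
    intro lam hlam
    obtain ⟨ν, hν, rfl⟩ := spectrum_exp_subset Mc hlam
    rw [Complex.norm_exp]
    exact Real.exp_lt_one_iff.mpr (h ν hν)
  obtain ⟨k, hk1, hk2⟩ := exists_pow_norm_lt_one (exp Mc) hY
  -- lower bound : 1 ≤ ‖exp (k • Ac)‖
  have hmemk : (k : ℂ) * μ ∈ spectrum ℂ ((k : ℕ) • Ac) := by
    have hk0 : ((k : ℂ)) ≠ 0 := by
      exact_mod_cast (Nat.pos_of_ne_zero (by omega)).ne'
    have heq : (Units.mk0 (k : ℂ) hk0) • Ac = (k : ℕ) • Ac := by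
      rw [Units.smul_def, Units.val_mk0, Nat.cast_smul_eq_nsmul]
    rw [show ((k:ℂ) * μ) = Units.mk0 (k:ℂ) hk0 • μ by
        rw [Units.smul_def, Units.val_mk0, smul_eq_mul], ← heq]
    exact (spectrum.smul_mem_smul_iff).mpr hμ
  have hexpmem := spectrum.exp_mem_exp ((k : ℕ) • Ac) hmemk
  have hlow : 1 ≤ ‖exp ((k : ℕ) • Ac)‖ := by
    have h1 := spectrum.norm_le_norm_of_mem hexpmem
    have h2 : ‖exp ((k : ℂ) * μ)‖ = Real.exp (k * μ.re) := by
      rw [← Complex.exp_eq_exp_ℂ, Complex.norm_exp, Complex.mul_re]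
      simp
    rw [h2] at h1
    refine le_trans ?_ h1
    rw [Real.one_le_exp_iff]
    positivity
  -- upper bound
  have hup : ‖exp ((k : ℕ) • Ac)‖ ≤ ‖(exp Mc) ^ k‖ := by
    have hmapA : (k : ℕ) • Ac = ((k • A).map Complex.ofReal) := by
      ext i j
      simp only [Matrix.smul_apply, Matrix.map_apply, hAc]
      simp only [nsmul_eq_mul]
      push_cast
      ring
    have hmapM : (k : ℕ) • Mc = ((k • metzlerPart A).map Complex.ofReal) := by
      ext i j
      simp only [Matrix.smul_apply, Matrix.map_apply, hMc]
      simp only [nsmul_eq_mul]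
      push_cast
      ring
    have hentry : ∀ i j, ‖(exp ((k : ℕ) • Ac)) i j‖ ≤ ‖(exp ((k : ℕ) • Mc)) i j‖ := by
      intro i j
      have h1 : ‖(exp ((k : ℕ) • Ac)) i j‖ ≤ (exp (metzlerPart (k • A))) i j := by
        rw [hmapA]
        exact key_entry_le (k • A) i j
      rw [metzlerPart_nsmul] at h1
      have h2 : (exp ((k : ℕ) • Mc)) i j = ((exp (k • metzlerPart A)) i j : ℂ) := by
        rw [hmapM, ← exp_map_ofReal]
        rfl
      rw [h2, Complex.norm_real, Real.norm_eq_abs]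
      exact h1.trans (le_abs_self _)
    calc ‖exp ((k : ℕ) • Ac)‖ ≤ ‖exp ((k : ℕ) • Mc)‖ :=
          norm_le_of_entrywise _ _ hentry
      _ = ‖(exp Mc) ^ k‖ := by erw [exp_nsmul]; rfl
  linarith
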